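/- Let R be a commutative ring, n a positive integer, and p an integer. Given h_{k,i} ∈ R with h_{k,n} = 0 for all k < 0, define for m ∈ {0,…,n} and λ ∈ ℤ^m the element s_λ := det((h_{λ_i + j - i, i})_{i,j ∈ [m]}). Fix μ ∈ ℤ^n with μ_n = 0 and set μ̄ = (μ_1, …, μ_{n-1}). Then h_{p,n} · s_{μ̄} = Σ_{β ∈ ℕ^n, |β| = p} s_{μ+β}. -/

import Mathlib

open Finset

private lemma det_row_expand {S : Type*} [CommRing S] {m : ℕ} (M : Matrix (Fin m) (Fin m) S) :
    M.det = ∑ σ : Equiv.Perm (Fin m), ((Equiv.Perm.sign σ : ℤ) : S) * ∏ i, M i (σ i) := by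
  rw [← Matrix.det_transpose, Matrix.det_apply']
  simp [Matrix.transpose_apply]

private lemma coeff_int_cast_mul {R : Type*} [CommRing R] (q : ℕ) (z : ℤ) (φ : PowerSeries R) :
    PowerSeries.coeff q ((z : PowerSeries R) * φ) = (z : R) * PowerSeries.coeff q φ := by
  rw [← zsmul_eq_mul, map_zsmul, zsmul_eq_mul]

private lemma telescope {R : Type*} [CommRing R] (f g : ℕ → R) (a : R)
    (hg : ∀ b, g b = f (b + 1)) (ha : f 0 = a) :
    PowerSeries.mk f + PowerSeries.mk g * -PowerSeries.X = PowerSeries.C a := by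
  ext b
  cases b with
  | zero =>
      simp [PowerSeries.coeff_mk, ha]
  | succ b =>
      simp [PowerSeries.coeff_mk, PowerSeries.coeff_succ_mul_X, hg, PowerSeries.coeff_C]

private def colOp (S : Type*) [CommRing S] (m : ℕ) (x : S) :
    Matrix (Fin (m + 1)) (Fin (m + 1)) S :=
  Matrix.of fun k j => if k = j then 1 else if (k : ℕ) = (j : ℕ) + 1 then -x else 0

private lemma colOp_det (S : Type*) [CommRing S] (m : ℕ) (x : S) :
    (colOp S m x).det = 1 := by
  rw [Matrix.det_of_lowerTriangular (colOp S m x)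
    (fun i j hij => by
      have hlt : i < j := hij
      have h1 : i ≠ j := ne_of_lt hlt
      have h2 : (i : ℕ) ≠ (j : ℕ) + 1 := by
        have := (Fin.lt_iff_val_lt_val.mp hlt); omega
      simp [colOp, h1, h2])]
  apply Finset.prod_eq_one
  intro i _
  simp [colOp]

private lemma mul_colOp_apply_of_lt {S : Type*} [CommRing S] {m : ℕ} (x : S)
    (N : Matrix (Fin (m + 1)) (Fin (m + 1)) S) (i j : Fin (m + 1)) (hj : (j : ℕ) < m) :
    (N * colOp S m x) i j = N i j + N i ⟨(j : ℕ) + 1, by omega⟩ * -x := by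
  rw [Matrix.mul_apply]
  rw [Finset.sum_eq_add_of_mem j ⟨(j : ℕ) + 1, by omega⟩ (Finset.mem_univ _) (Finset.mem_univ _)
    (by intro hh; have := congrArg Fin.val hh; simp at this)
    (by
      intro k _ hk
      have h1 : k ≠ j := hk.1
      have h2 : (k : ℕ) ≠ (j : ℕ) + 1 := by
        intro hv; exact hk.2 (Fin.ext hv)
      simp [colOp, h1, h2])]
  have h3 : (⟨(j : ℕ) + 1, by omega⟩ : Fin (m + 1)) ≠ j := by
    intro hh; have := congrArg Fin.val hh; simp at this
  simp [colOp, h3]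

private lemma mul_colOp_apply_last {S : Type*} [CommRing S] {m : ℕ} (x : S)
    (N : Matrix (Fin (m + 1)) (Fin (m + 1)) S) (i : Fin (m + 1)) :
    (N * colOp S m x) i (Fin.last m) = N i (Fin.last m) := by
  rw [Matrix.mul_apply]
  rw [Finset.sum_eq_single (Fin.last m)
    (by
      intro k _ hk
      have h2 : (k : ℕ) ≠ m + 1 := by
        have := k.isLt; omega
      simp [colOp, hk, h2])
    (fun hh => absurd (Finset.mem_univ _) hh)]
  simp [colOp]

theorem pre_pieri_cor4_comm {R : Type*} [CommRing R] (n : ℕ) (p : ℤ)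
    (h : ℤ → Fin (n + 1) → R)
    (h0 : ∀ k : ℤ, k < 0 → h k (Fin.last n) = 0)
    (μ : Fin (n + 1) → ℤ) (hμ : μ (Fin.last n) = 0) :
    h p (Fin.last n)
        * Matrix.det (Matrix.of fun i j : Fin n =>
            h (μ i.castSucc + ((j : ℕ) : ℤ) - ((i : ℕ) : ℤ)) i.castSucc)
      = ∑ᶠ (β : Fin (n + 1) → ℕ) (_ : ∑ i, (β i : ℤ) = p),
          Matrix.det (Matrix.of fun i j : Fin (n + 1) =>
            h (μ i + (β i : ℤ) + ((j : ℕ) : ℤ) - ((i : ℕ) : ℤ)) i) := by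
  classical
  rcases lt_or_ge p 0 with hp | hp
  · rw [h0 p hp, zero_mul]
    symm
    apply finsum_eq_zero_of_forall_eq_zero
    intro β
    have hP : ¬ (∑ i, (β i : ℤ) = p) := by
      intro hs
      have : (0 : ℤ) ≤ ∑ i, (β i : ℤ) := Finset.sum_nonneg fun i _ => Int.natCast_nonneg _
      omega
    rw [finsum_eq_if, if_neg hP]
  · set q := p.toNat with hqdef
    have hq : (q : ℤ) = p := Int.toNat_of_nonneg hp
    obtain ⟨N, hN⟩ : ∃ N : Matrix (Fin (n + 1)) (Fin (n + 1)) (PowerSeries R),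
        N = Matrix.of fun i j : Fin (n + 1) => PowerSeries.mk fun b =>
          h (μ i + (b : ℤ) + ((j : ℕ) : ℤ) - ((i : ℕ) : ℤ)) i := ⟨_, rfl⟩
    obtain ⟨V, hV⟩ : ∃ V : Matrix (Fin (n + 1)) (Fin (n + 1)) (PowerSeries R),
        V = Matrix.of fun i j : Fin (n + 1) => if (j : ℕ) < n
          then PowerSeries.C (h (μ i + ((j : ℕ) : ℤ) - ((i : ℕ) : ℤ)) i)
          else PowerSeries.mk fun b =>
            h (μ i + (b : ℤ) + (n : ℤ) - ((i : ℕ) : ℤ)) i := ⟨_, rfl⟩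
    -- Step 1 : the finsum equals a sum over the finsupp antidiagonal
    have step1 : (∑ᶠ (β : Fin (n + 1) → ℕ) (_ : ∑ i, (β i : ℤ) = p),
          Matrix.det (Matrix.of fun i j : Fin (n + 1) =>
            h (μ i + (β i : ℤ) + ((j : ℕ) : ℤ) - ((i : ℕ) : ℤ)) i))
        = ∑ l ∈ Finset.finsuppAntidiag (Finset.univ : Finset (Fin (n + 1))) q,
            Matrix.det (Matrix.of fun i j : Fin (n + 1) =>
              h (μ i + ((l i : ℕ) : ℤ) + ((j : ℕ) : ℤ) - ((i : ℕ) : ℤ)) i) := by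
      have e1 : (∑ᶠ (β : Fin (n + 1) → ℕ) (_ : ∑ i, (β i : ℤ) = p),
            Matrix.det (Matrix.of fun i j : Fin (n + 1) =>
              h (μ i + (β i : ℤ) + ((j : ℕ) : ℤ) - ((i : ℕ) : ℤ)) i))
          = ∑ᶠ (β : Fin (n + 1) → ℕ)
              (_ : β ∈ ((Finset.piAntidiag Finset.univ q : Finset (Fin (n + 1) → ℕ)) :
                  Set (Fin (n + 1) → ℕ))),
              Matrix.det (Matrix.of fun i j : Fin (n + 1) =>
                h (μ i + (β i : ℤ) + ((j : ℕ) : ℤ) - ((i : ℕ) : ℤ)) i) := by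
        refine finsum_congr fun β => finsum_congr_Prop ?_ fun _ => rfl
        apply propext
        rw [Finset.mem_coe, Finset.mem_piAntidiag]
        constructor
        · intro hs
          refine ⟨?_, fun i _ => Finset.mem_univ i⟩
          have : ((∑ i, β i : ℕ) : ℤ) = (q : ℤ) := by push_cast; rw [hs, hq]
          exact_mod_cast this
        · rintro ⟨hs, -⟩
          rw [← hq, ← hs]
          push_cast
          rfl
      rw [e1, finsum_mem_coe_finset]
      refine Finset.sum_nbij' (fun β => Finsupp.equivFunOnFinite.symm β) (fun l => ⇑l)
        ?_ ?_ ?_ ?_ ?_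
      · intro β hβ
        rw [Finset.mem_piAntidiag] at hβ
        rw [Finset.mem_finsuppAntidiag]
        refine ⟨?_, fun i _ => Finset.mem_univ i⟩
        simpa [Finsupp.equivFunOnFinite] using hβ.1
      · intro l hl
        rw [Finset.mem_finsuppAntidiag] at hl
        rw [Finset.mem_piAntidiag]
        exact ⟨hl.1, fun i _ => Finset.mem_univ i⟩
      · intro β _
        exact Finsupp.equivFunOnFinite.apply_symm_apply β
      · intro l _
        exact Finsupp.equivFunOnFinite_symm_coe l
      · intro β _
        rfl
    -- Step 2 : the antidiagonal sum is a coefficient of det N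
    have step2 : (∑ l ∈ Finset.finsuppAntidiag (Finset.univ : Finset (Fin (n + 1))) q,
            Matrix.det (Matrix.of fun i j : Fin (n + 1) =>
              h (μ i + ((l i : ℕ) : ℤ) + ((j : ℕ) : ℤ) - ((i : ℕ) : ℤ)) i))
        = PowerSeries.coeff q N.det := by
      rw [det_row_expand N, map_sum]
      rw [Finset.sum_congr rfl fun l (_ : l ∈ Finset.finsuppAntidiag
        (Finset.univ : Finset (Fin (n + 1))) q) => det_row_expand
          (Matrix.of fun i j : Fin (n + 1) =>
            h (μ i + ((l i : ℕ) : ℤ) + ((j : ℕ) : ℤ) - ((i : ℕ) : ℤ)) i), Finset.sum_comm]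
      refine Finset.sum_congr rfl fun σ _ => ?_
      rw [coeff_int_cast_mul, PowerSeries.coeff_prod, Finset.mul_sum]
      refine Finset.sum_congr rfl fun l hl => ?_
      congr 1
      refine Finset.prod_congr rfl fun i _ => ?_
      rw [hN]
      simp [PowerSeries.coeff_mk]
    -- Step 3 : column reduction
    have hNU : N * colOp (PowerSeries R) n PowerSeries.X = V := by
      refine Matrix.ext fun i j => ?_
      by_cases hj : (j : ℕ) < n
      · rw [mul_colOp_apply_of_lt PowerSeries.X N i j hj, hN, hV]
        simp only [Matrix.of_apply, if_pos hj]
        refine telescope _ _ _ ?_ ?_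
        · intro b
          congr 1
          push_cast
          ring
        · congr 1
          push_cast
          ring
      · have hj' : j = Fin.last n := by
          have := j.isLt
          apply Fin.ext
          simp only [Fin.val_last]
          omega
        subst hj'
        rw [mul_colOp_apply_last, hN, hV]
        simp only [Matrix.of_apply, Fin.val_last]
        rw [if_neg (lt_irrefl n)]
    have hdet : N.det = V.det := by
      rw [← hNU, Matrix.det_mul, colOp_det, mul_one]
    -- Step 4 : compute det V
    have step4 : V.det = V (Fin.last n) (Fin.last n)
        * PowerSeries.C (Matrix.det (Matrix.of fun i j : Fin n =>
            h (μ i.castSucc + ((j : ℕ) : ℤ) - ((i : ℕ) : ℤ)) i.castSucc)) := by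
      rw [Matrix.det_succ_row V (Fin.last n)]
      rw [Finset.sum_eq_single (Fin.last n)
        (by
          intro j _ hne
          have hjlt : (j : ℕ) < n := by
            have h1 := j.isLt
            have h2 : (j : ℕ) ≠ n := fun hv => hne (Fin.ext (by simp [Fin.val_last, hv]))
            omega
          have hzero : V (Fin.last n) j = 0 := by
            rw [hV]
            simp only [Matrix.of_apply, if_pos hjlt, hμ, Fin.val_last]
            have hneg : (0 : ℤ) + ((j : ℕ) : ℤ) - (n : ℤ) < 0 := by
              have := hjlt; omega
            rw [h0 _ hneg, map_zero]
          rw [hzero, mul_zero, zero_mul])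
        (fun hh => absurd (Finset.mem_univ _) hh)]
      rw [Fin.succAbove_last]
      have hsub : V.submatrix Fin.castSucc Fin.castSucc
          = (Matrix.of fun i j : Fin n =>
              h (μ i.castSucc + ((j : ℕ) : ℤ) - ((i : ℕ) : ℤ)) i.castSucc).map
            PowerSeries.C := by
        refine Matrix.ext fun i j => ?_
        have hjlt : ((j.castSucc : Fin (n + 1)) : ℕ) < n := by
          simp [Fin.coe_castSucc, j.isLt]
        rw [hV]
        simp only [Matrix.submatrix_apply, Matrix.of_apply, Matrix.map_apply, if_pos hjlt,
          Fin.coe_castSucc]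
        rw [if_pos j.isLt]
      rw [hsub, ← RingHom.mapMatrix_apply, ← RingHom.map_det]
      have hsign : ((-1 : PowerSeries R)) ^ ((Fin.last n : ℕ) + (Fin.last n : ℕ)) = 1 :=
        Even.neg_one_pow ⟨(Fin.last n : ℕ), rfl⟩
      rw [hsign, one_mul]
    -- Step 5 : extract the coefficient
    have step5 : PowerSeries.coeff q V.det
        = h p (Fin.last n) * Matrix.det (Matrix.of fun i j : Fin n =>
            h (μ i.castSucc + ((j : ℕ) : ℤ) - ((i : ℕ) : ℤ)) i.castSucc) := by
      rw [step4, PowerSeries.coeff_mul_C]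
      rw [hV]
      simp only [Matrix.of_apply, Fin.val_last]
      rw [if_neg (lt_irrefl n), PowerSeries.coeff_mk]
      have harg : μ (Fin.last n) + ((q : ℕ) : ℤ) + (n : ℤ) - (n : ℤ) = p := by
        rw [hμ, ← hq]; ring
      rw [harg]
    rw [step1, step2, hdet, step5]
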